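/- Let α be a partial action of a topological group G on a Hausdorff topological space X, and let X̃ = (G × X)/∼ be the enveloping space, i.e. the quotient of G × X by the relation (r,x) ∼ (s,y) iff x ∈ X_{r⁻¹s} and α_{s⁻¹r}(x) = y, with the quotient topology. Let Gr(α) = {(t,x,y) ∈ G × X × X : x ∈ X_{t⁻¹} and α_t(x) = y} be the graph of α. Then X̃ is Hausdorff if and only if Gr(α) is a closed subset of G × X × X. -/

import Mathlib

/-- A partial action of a topological group `G` on a topological space `X`. -/
structure TopPartialAction (G : Type*) (X : Type*) [Group G] [TopologicalSpace G]
    [IsTopologicalGroup G] [TopologicalSpace X] where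
  dom : G → Set X
  act : G → X → X
  isOpen_dom : ∀ t, IsOpen (dom t)
  bijOn : ∀ t, Set.BijOn (act t) (dom t⁻¹) (dom t)
  isOpen_graph : IsOpen {p : G × X | p.2 ∈ dom p.1⁻¹}
  continuousOn : ContinuousOn (fun p : G × X => act p.1 p.2) {p : G × X | p.2 ∈ dom p.1⁻¹}
  dom_one : dom 1 = Set.univ
  act_one : ∀ x, act 1 x = x
  act_comp : ∀ s t x, x ∈ dom t⁻¹ → act t x ∈ dom s⁻¹ →
    x ∈ dom (s * t)⁻¹ ∧ act (s * t) x = act s (act t x)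

/-- The relation `(r, x) ∼ (s, y) ↔ x ∈ X_{r⁻¹ s} ∧ α_{s⁻¹ r}(x) = y` on `G × X`. -/
def TopPartialAction.rel {G X : Type*} [Group G] [TopologicalSpace G] [IsTopologicalGroup G]
    [TopologicalSpace X] (α : TopPartialAction G X) (p q : G × X) : Prop :=
  p.2 ∈ α.dom (p.1⁻¹ * q.1) ∧ α.act (q.1⁻¹ * p.1) p.2 = q.2

namespace TopPartialAction

variable {G X : Type*} [Group G] [TopologicalSpace G] [IsTopologicalGroup G]
  [TopologicalSpace X] (α : TopPartialAction G X)

lemma mem_dom_of_act {t : G} {x : X} (hx : x ∈ α.dom t⁻¹) : α.act t x ∈ α.dom t :=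
  (α.bijOn t).mapsTo hx

lemma act_inv_act {t : G} {x : X} (hx : x ∈ α.dom t⁻¹) : α.act t⁻¹ (α.act t x) = x := by
  have h := α.act_comp t⁻¹ t x hx (by simpa using α.mem_dom_of_act hx)
  have := h.2.symm
  simpa [α.act_one] using this

lemma rel_equivalence : Equivalence α.rel := by
  constructor
  · intro p
    refine ⟨by simp [α.dom_one], by simp [α.act_one]⟩
  · rintro ⟨r, x⟩ ⟨s, y⟩ ⟨h1, h2⟩
    have h1' : x ∈ α.dom (s⁻¹ * r)⁻¹ := by simpa [mul_inv_rev] using h1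
    have hy : y ∈ α.dom (s⁻¹ * r) := by
      have := α.mem_dom_of_act h1'
      rwa [h2] at this
    refine ⟨hy, ?_⟩
    have := α.act_inv_act h1'
    rw [h2] at this
    simpa [mul_inv_rev] using this
  · rintro ⟨r, x⟩ ⟨s, y⟩ ⟨u, z⟩ ⟨h1, h2⟩ ⟨h3, h4⟩
    have h1' : x ∈ α.dom (s⁻¹ * r)⁻¹ := by simpa [mul_inv_rev] using h1
    have h3' : α.act (s⁻¹ * r) x ∈ α.dom (u⁻¹ * s)⁻¹ := by
      rw [h2]; simpa [mul_inv_rev] using h3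
    have h := α.act_comp (u⁻¹ * s) (s⁻¹ * r) x h1' h3'
    have hmul : (u⁻¹ * s) * (s⁻¹ * r) = u⁻¹ * r := by group
    refine ⟨?_, ?_⟩
    · have := h.1
      rw [hmul] at this
      simpa [mul_inv_rev] using this
    · have := h.2
      rw [hmul, h2, h4] at this
      exact this

lemma continuousOn_act (t : G) : ContinuousOn (α.act t) (α.dom t⁻¹) := by
  have hc : ContinuousOn (fun x : X => α.act (t, x).1 (t, x).2) (α.dom t⁻¹) := by
    apply α.continuousOn.comp ((continuous_const.prodMk continuous_id).continuousOn)
    intro x hx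
    simpa using hx
  simpa using hc

/-- The partial homeomorphism `(r, x) ↦ (r t⁻¹, α_t x)` of `G × X`. -/
noncomputable def F (t : G) : G × X → G × X := fun p => (p.1 * t⁻¹, α.act t p.2)

lemma continuousOn_F (t : G) : ContinuousOn (α.F t) {p : G × X | p.2 ∈ α.dom t⁻¹} := by
  apply ContinuousOn.prodMk
  · exact (continuous_fst.mul continuous_const).continuousOn
  · exact (α.continuousOn_act t).comp continuous_snd.continuousOn (fun p hp => hp)

lemma isOpen_image_F (t : G) {W : Set (G × X)} (hW : IsOpen W)
    (hW' : W ⊆ {p : G × X | p.2 ∈ α.dom t⁻¹}) : IsOpen (α.F t '' W) := by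
  have key : α.F t '' W = {p : G × X | p.2 ∈ α.dom t⁻¹⁻¹} ∩ (α.F t⁻¹) ⁻¹' W := by
    ext ⟨s, y⟩
    constructor
    · rintro ⟨⟨r, x⟩, hrx, heq⟩
      have hx : x ∈ α.dom t⁻¹ := hW' hrx
      obtain ⟨hs, hy⟩ : s = r * t⁻¹ ∧ y = α.act t x := by
        constructor
        · exact congrArg Prod.fst heq.symm
        · exact congrArg Prod.snd heq.symm
      refine ⟨by rw [inv_inv]; simpa [hy] using α.mem_dom_of_act hx, ?_⟩
      show (s * t⁻¹⁻¹, α.act t⁻¹ y) ∈ W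
      have : (s * t⁻¹⁻¹, α.act t⁻¹ y) = (r, x) := by
        rw [hs, hy, α.act_inv_act hx]
        simp [mul_assoc]
      rw [this]; exact hrx
    · rintro ⟨hy, hw⟩
      have hy' : y ∈ α.dom t⁻¹⁻¹ := hy
      refine ⟨(s * t⁻¹⁻¹, α.act t⁻¹ y), hw, ?_⟩
      have hx : α.act t⁻¹ y ∈ α.dom t⁻¹ := hW' hw
      show (s * t⁻¹⁻¹ * t⁻¹, α.act t (α.act t⁻¹ y)) = (s, y)
      have := α.act_inv_act (t := t⁻¹) hy'
      rw [inv_inv] at this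
      rw [this]
      simp [mul_assoc]
  rw [key]
  exact (α.continuousOn_F t⁻¹).isOpen_inter_preimage
    ((α.isOpen_dom t⁻¹⁻¹).preimage continuous_snd) hW

lemma isOpenMap_quot_mk : IsOpenMap (Quot.mk α.rel) := by
  intro U hU
  rw [isQuotientMap_quot_mk.isOpen_preimage.symm]
  have key : Quot.mk α.rel ⁻¹' (Quot.mk α.rel '' U)
      = ⋃ t : G, α.F t '' (U ∩ {p : G × X | p.2 ∈ α.dom t⁻¹}) := by
    ext ⟨s, y⟩
    simp only [Set.mem_preimage, Set.mem_image, Set.mem_iUnion]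
    constructor
    · rintro ⟨⟨r, x⟩, hrx, heq⟩
      have hrel : α.rel (r, x) (s, y) :=
        (α.rel_equivalence.eqvGen_iff).mp ((Quot.eq).mp heq)
      obtain ⟨h1, h2⟩ := hrel
      refine ⟨s⁻¹ * r, ⟨r, x⟩, ⟨hrx, by simpa [mul_inv_rev] using h1⟩, ?_⟩
      show (r * (s⁻¹ * r)⁻¹, α.act (s⁻¹ * r) x) = (s, y)
      rw [h2]
      simp [mul_inv_rev, mul_assoc]
    · rintro ⟨t, ⟨r, x⟩, ⟨hrx, hx⟩, heq⟩
      refine ⟨(r, x), hrx, ?_⟩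
      apply (Quot.eq).mpr
      apply (α.rel_equivalence.eqvGen_iff).mpr
      obtain ⟨hs, hy⟩ : s = r * t⁻¹ ∧ y = α.act t x := by
        exact ⟨congrArg Prod.fst heq.symm, congrArg Prod.snd heq.symm⟩
      constructor
      · show x ∈ α.dom (r⁻¹ * s)
        rw [hs]
        simpa [mul_assoc] using hx
      · show α.act (s⁻¹ * r) x = y
        rw [hs, hy]
        congr 1
        group
  rw [key]
  exact isOpen_iUnion fun t =>
    α.isOpen_image_F t (hU.inter (by exact (α.isOpen_dom t⁻¹).preimage continuous_snd))
    Set.inter_subset_right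

end TopPartialAction

/-- If `X` is Hausdorff, the enveloping space `X̃ = (G × X)/∼` is Hausdorff if and only
if the graph `Gr(α) = {(t, x, y) : x ∈ X_{t⁻¹}, α_t x = y}` is closed in `G × X × X`. -/
theorem TopPartialAction.t2_iff_closed_graph {G X : Type*} [Group G] [TopologicalSpace G]
    [IsTopologicalGroup G] [TopologicalSpace X] [T2Space X] (α : TopPartialAction G X) :
    T2Space (Quot α.rel) ↔
      IsClosed {p : G × X × X | p.2.1 ∈ α.dom p.1⁻¹ ∧ α.act p.1 p.2.1 = p.2.2} := by
  have hq : IsOpenQuotientMap (Quot.mk α.rel) :=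
    ⟨Quot.exists_rep, continuous_quot_mk, α.isOpenMap_quot_mk⟩
  have hqq : IsOpenQuotientMap (Prod.map (Quot.mk α.rel) (Quot.mk α.rel)) := hq.prodMap hq
  have hpre : Prod.map (Quot.mk α.rel) (Quot.mk α.rel) ⁻¹' Set.diagonal (Quot α.rel)
      = {pq : (G × X) × (G × X) | α.rel pq.1 pq.2} := by
    ext ⟨p, q⟩
    simp only [Set.mem_preimage, Set.mem_diagonal_iff, Prod.map_apply, Set.mem_setOf_eq]
    rw [Quot.eq]
    exact α.rel_equivalence.eqvGen_iff
  rw [t2_iff_isClosed_diagonal, ← hqq.isQuotientMap.isClosed_preimage, hpre]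
  constructor
  · intro hR
    have : {p : G × X × X | p.2.1 ∈ α.dom p.1⁻¹ ∧ α.act p.1 p.2.1 = p.2.2}
        = (fun p : G × X × X => ((p.1, p.2.1), ((1 : G), p.2.2))) ⁻¹'
          {pq : (G × X) × (G × X) | α.rel pq.1 pq.2} := by
      ext ⟨t, x, y⟩
      simp [TopPartialAction.rel]
    rw [this]
    exact hR.preimage (by fun_prop)
  · intro hGr
    have : {pq : (G × X) × (G × X) | α.rel pq.1 pq.2}
        = (fun pq : (G × X) × (G × X) => (pq.2.1⁻¹ * pq.1.1, pq.1.2, pq.2.2)) ⁻¹'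
          {p : G × X × X | p.2.1 ∈ α.dom p.1⁻¹ ∧ α.act p.1 p.2.1 = p.2.2} := by
      ext ⟨⟨r, x⟩, ⟨s, y⟩⟩
      simp [TopPartialAction.rel, mul_inv_rev]
    rw [this]
    exact hGr.preimage (by fun_prop)
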